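/- Suppose φ is moderate, dualizable, associative and commutative. If P ∈ K⟨Y⟩ is primitive for Δ_{⧢_φ}, then π_1(P) = P, and for all positive integers k, n one has π_n(P^k) = δ_{k,n} P^k, where π_n = (1/n!) π_1^{⋆n} is the n-th Eulerian projector for the convolution product f ⋆ g = conc ∘ (f ⊗ g) ∘ Δ_{⧢_φ}. -/

import Mathlib

noncomputable section

open Finsupp

variable {K : Type*} [CommRing K] [Algebra ℚ K]
variable {Y : Type*} [DecidableEq Y]

/-- The word `w ∈ Y*` viewed as a basis element of `K⟨Y⟩`. -/
def word (w : List Y) : List Y →₀ K := Finsupp.single w 1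

/-- Left concatenation by a letter, as a linear endomorphism of `K⟨Y⟩`. -/
def consL (a : Y) : (List Y →₀ K) →ₗ[K] (List Y →₀ K) :=
  Finsupp.lmapDomain K K (List.cons a)

/-- `m` is the `φ`-deformed shuffle product: it satisfies the initialization
`1 ⧢ w = w ⧢ 1 = w` and the recursion
`(au) ⧢ (bv) = a (u ⧢ bv) + b (au ⧢ v) + φ(a,b)(u ⧢ v)`. -/
def IsPhiShuffle (φ : Y → Y → (Y →₀ K))
    (m : (List Y →₀ K) →ₗ[K] (List Y →₀ K) →ₗ[K] (List Y →₀ K)) : Prop :=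
  (∀ w : List Y, m (word []) (word w) = word w) ∧
  (∀ w : List Y, m (word w) (word []) = word w) ∧
  ∀ (a b : Y) (u v : List Y),
    m (word (a :: u)) (word (b :: v)) =
      consL a (m (word u) (word (b :: v))) + consL b (m (word (a :: u)) (word v)) +
      (φ a b).sum fun c k => k • consL c (m (word u) (word v))

/-- Bilinear extension of `φ` to `KY`. -/
def phiExt (φ : Y → Y → (Y →₀ K)) (p q : Y →₀ K) : Y →₀ K :=
  p.sum fun a ka => q.sum fun b kb => (ka * kb) • φ a b

/-- The extension of `φ` to `KY ⊗ KY → KY` is associative. -/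
def PhiAssoc (φ : Y → Y → (Y →₀ K)) : Prop :=
  ∀ a b c : Y, phiExt φ (φ a b) (Finsupp.single c 1) = phiExt φ (Finsupp.single a 1) (φ b c)

/-- The extension of `φ` is commutative. -/
def PhiComm (φ : Y → Y → (Y →₀ K)) : Prop := ∀ a b : Y, φ a b = φ b a

/-- `φ` is dualizable: for every letter `z` only finitely many pairs of letters
have `z` in the support of their `φ`-product. -/
def PhiDualizable (φ : Y → Y → (Y →₀ K)) : Prop :=
  ∀ z : Y, {p : Y × Y | φ p.1 p.2 z ≠ 0}.Finite

/-- Extension of an associative `φ` to nonempty words: `φ(xw) = φ(x, φ(w))`. -/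
def phiWord (φ : Y → Y → (Y →₀ K)) : List Y → (Y →₀ K)
  | [] => 0
  | [x] => Finsupp.single x 1
  | x :: y :: w => (phiWord φ (y :: w)).sum fun b k => k • φ x b

/-- `φ` is moderate: for every letter `y`, only finitely many nonempty words `w`
satisfy `⟨y, φ(w)⟩ ≠ 0`. -/
def PhiModerate (φ : Y → Y → (Y →₀ K)) : Prop :=
  ∀ y : Y, {w : List Y | w ≠ [] ∧ phiWord φ w y ≠ 0}.Finite

/-- Pairing of two polynomials (the words form an orthonormal basis). -/
def pairPP (p q : List Y →₀ K) : K := p.sum fun w a => a * q w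

/-- Pairing `⟨S, p⟩` of a series with a polynomial. -/
def pairPS (S : List Y → K) (p : List Y →₀ K) : K := p.sum fun w a => a * S w

/-- Concatenation product on `K⟨Y⟩`. -/
def concP (p q : List Y →₀ K) : List Y →₀ K :=
  p.sum fun u a => q.sum fun v b => Finsupp.single (u ++ v) (a * b)

/-- Concatenation powers. -/
def concPow (p : List Y →₀ K) : ℕ → (List Y →₀ K)
  | 0 => word []
  | n + 1 => concP p (concPow p n)

/-- Powers with respect to a bilinear product `m`. -/
def mpow (m : (List Y →₀ K) →ₗ[K] (List Y →₀ K) →ₗ[K] (List Y →₀ K))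
    (p : List Y →₀ K) : ℕ → (List Y →₀ K)
  | 0 => word []
  | n + 1 => m p (mpow m p n)

/-- `m`-product of a list of polynomials. -/
def prodM (m : (List Y →₀ K) →ₗ[K] (List Y →₀ K) →ₗ[K] (List Y →₀ K))
    (L : List (List Y →₀ K)) : List Y →₀ K :=
  L.foldr (fun p acc => m p acc) (word [])

/-- The unit series. -/
def oneS : List Y → K := fun w => if w = [] then 1 else 0

/-- Concatenation (Cauchy) product of series. -/
def mulS (S T : List Y → K) : List Y → K := fun w =>
  ∑ i ∈ Finset.range (w.length + 1), S (w.take i) * T (w.drop i)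

/-- Concatenation powers of a series. -/
def powS (S : List Y → K) : ℕ → (List Y → K)
  | 0 => oneS
  | n + 1 => mulS S (powS S n)

/-- Concatenation product of a list of series. -/
def prodS (L : List (List Y → K)) : List Y → K := L.foldr (fun S acc => mulS S acc) oneS

/-- The coproduct `Δ_{⧢_φ}` dual to `m`, on series: `Δ(S)(u,v) = ⟨S, u ⧢_φ v⟩`. -/
def DeltaS (m : (List Y →₀ K) →ₗ[K] (List Y →₀ K) →ₗ[K] (List Y →₀ K))
    (S : List Y → K) : List Y × List Y → K :=
  fun p => pairPS S (m (word p.1) (word p.2))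

/-- `S` is primitive: `Δ_{⧢_φ}(S) = S ⊗ 1 + 1 ⊗ S`. -/
def PrimS (m : (List Y →₀ K) →ₗ[K] (List Y →₀ K) →ₗ[K] (List Y →₀ K))
    (S : List Y → K) : Prop :=
  ∀ u v : List Y, DeltaS m S (u, v) =
    (if v = [] then S u else 0) + (if u = [] then S v else 0)

/-- `S` is group-like: `⟨S,1⟩ = 1` and `Δ_{⧢_φ}(S) = S ⊗ S`. -/
def GroupLikeS (m : (List Y →₀ K) →ₗ[K] (List Y →₀ K) →ₗ[K] (List Y →₀ K))
    (S : List Y → K) : Prop :=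
  S [] = 1 ∧ ∀ u v : List Y, DeltaS m S (u, v) = S u * S v

/-- `Δfn` is the (finitely supported) dual coproduct witnessing dualizability of `m`:
`⟨u ⧢_φ v, w⟩ = ⟨u ⊗ v, Δ(w)⟩`. -/
def IsDualWitness (m : (List Y →₀ K) →ₗ[K] (List Y →₀ K) →ₗ[K] (List Y →₀ K))
    (Δfn : List Y → (List Y × List Y →₀ K)) : Prop :=
  ∀ u v w : List Y, (m (word u) (word v)) w = Δfn w (u, v)

/-- All factorizations of a word into nonempty blocks. -/
def cuts : List Y → List (List (List Y))
  | [] => [[]]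
  | a :: w =>
    (cuts w).flatMap fun parts =>
      match parts with
      | [] => [[[a]]]
      | p :: ps => [[a] :: p :: ps, (a :: p) :: ps]

/-- The extended Eulerian projector `π₁` on series:
`π₁(S) = Σ_{k≥1} ((-1)^{k-1}/k) Σ_{u_1⋯u_k = w, u_i ∈ Y⁺} ⟨S, u_1 ⧢_φ ⋯ ⧢_φ u_k⟩ w`. -/
def piOneS (m : (List Y →₀ K) →ₗ[K] (List Y →₀ K) →ₗ[K] (List Y →₀ K))
    (S : List Y → K) : List Y → K := fun w =>
  ((cuts w).map fun parts =>
    algebraMap ℚ K ((-1) ^ (parts.length - 1) / (parts.length : ℚ)) *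
      pairPS S (prodM m (parts.map word))).sum

/-- Logarithm of a series `S` with `⟨S,1⟩ = 1`. -/
def logS (S : List Y → K) : List Y → K := fun w =>
  ∑ n ∈ Finset.Icc 1 w.length,
    algebraMap ℚ K ((-1) ^ (n - 1) / (n : ℚ)) * powS (fun t => S t - oneS t) n w

/-- Convolution of endomorphisms (valued in series), using a dual coproduct witness. -/
def convT (Δfn : List Y → (List Y × List Y →₀ K))
    (f g : (List Y →₀ K) → (List Y → K)) : (List Y →₀ K) → (List Y → K) :=
  fun P w => P.sum fun t a =>
    a * (Δfn t).sum fun p c => c * mulS (f (word p.1)) (g (word p.2)) w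

/-- The convolution unit `e = 1 ∘ ε`. -/
def eT : (List Y →₀ K) → (List Y → K) := fun P w => if w = [] then P [] else 0

/-- Convolution powers `π₁^{⋆ n}` of the Eulerian projector. -/
def convPowPi (m : (List Y →₀ K) →ₗ[K] (List Y →₀ K) →ₗ[K] (List Y →₀ K))
    (Δfn : List Y → (List Y × List Y →₀ K)) : ℕ → ((List Y →₀ K) → (List Y → K))
  | 0 => eT
  | n + 1 => convT Δfn (fun P => piOneS m fun t => P t) (convPowPi m Δfn n)

/-- Lyndon words: nonempty and lexicographically smaller than each proper suffix. -/
def IsLyndon [LinearOrder Y] (w : List Y) : Prop :=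
  w ≠ [] ∧ ∀ u v : List Y, u ≠ [] → v ≠ [] → w = u ++ v → List.Lex (· < ·) w v

/-- Strictly decreasing lists of Lyndon words with positive exponents,
indexing monomials in Lyndon words. -/
abbrev DecLyn (Y : Type*) [LinearOrder Y] :=
  {s : List (List Y × ℕ) // (∀ p ∈ s, IsLyndon p.1 ∧ 0 < p.2) ∧
    s.Chain' fun a b => List.Lex (· < ·) b.1 a.1}

/-- `⧢_φ`-monomial `l₁^{⧢ i₁} ⧢ ⋯ ⧢ l_k^{⧢ i_k}`. -/
def shMonomial (m : (List Y →₀ K) →ₗ[K] (List Y →₀ K) →ₗ[K] (List Y →₀ K))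
    (s : List (List Y × ℕ)) : List Y →₀ K :=
  s.foldr (fun p acc => m (mpow m (word p.1) p.2) acc) (word [])

/-- Concatenation monomial `Π_{l₁}^{i₁} ⋯ Π_{l_k}^{i_k}` in a family `Pi`. -/
def concMonomial (Pi : List Y → (List Y →₀ K)) (s : List (List Y × ℕ)) : List Y →₀ K :=
  s.foldr (fun p acc => concP (concPow (Pi p.1) p.2) acc) (word [])

/-- The singleton index `l¹ ∈ DecLyn Y` attached to a Lyndon word. -/
def singleIdx [LinearOrder Y] (l : List Y) (hl : IsLyndon l) : DecLyn Y :=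
  ⟨[(l, 1)], ⟨fun p hp => by
      rw [List.mem_singleton] at hp; subst hp; exact ⟨hl, Nat.one_pos⟩,
    List.isChain_singleton _⟩⟩

/-- `(s, r)` is the standard factorization of the Lyndon word `l`:
`l = sr` with `s, r` nonempty and `r` the lexicographically least proper suffix. -/
def StdFact [LinearOrder Y] (l s r : List Y) : Prop :=
  l = s ++ r ∧ s ≠ [] ∧ r ≠ [] ∧
  ∀ s' r' : List Y, l = s' ++ r' → s' ≠ [] → r' ≠ [] → r = r' ∨ List.Lex (· < ·) r r'

/-- `Pi` is the family defined by `Π_y = π₁(y)` on letters and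
`Π_l = [Π_s, Π_r]` for the standard factorization `(s,r)` of a Lyndon word `l`. -/
def IsPiFamily [LinearOrder Y]
    (m : (List Y →₀ K) →ₗ[K] (List Y →₀ K) →ₗ[K] (List Y →₀ K))
    (Pi : List Y → (List Y →₀ K)) : Prop :=
  (∀ y : Y, ∀ w : List Y, Pi [y] w = piOneS m (fun t => (word [y] : List Y →₀ K) t) w) ∧
  ∀ l s r : List Y, IsLyndon l → StdFact l s r →
    Pi l = concP (Pi s) (Pi r) - concP (Pi r) (Pi s)

/-! ### Auxiliary lemmas -/
set_option linter.unusedSectionVars false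
set_option maxHeartbeats 1000000

section AuxBasic

lemma word_apply (u w : List Y) : (word u : List Y →₀ K) w = if u = w then 1 else 0 :=
  Finsupp.single_apply

lemma word_cons_apply (x : Y) (xs : List Y) (z : Y) (t : List Y) :
    (word (x :: xs) : List Y →₀ K) (z :: t) = if x = z then (word xs : List Y →₀ K) t else 0 := by
  simp only [word_apply, List.cons.injEq]
  by_cases h : x = z <;> simp [h]

lemma cons_injective (c : Y) : Function.Injective (List.cons c) := by
  intro a b hab; simpa using hab

lemma consL_apply_cons (c : Y) (q : List Y →₀ K) (z : Y) (t : List Y) :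
    consL c q (z :: t) = if c = z then q t else 0 := by
  by_cases h : c = z
  · subst h
    simpa [consL, Finsupp.lmapDomain] using
      Finsupp.mapDomain_apply (cons_injective c) q t
  · rw [if_neg h]
    have hr : (z :: t) ∉ Set.range (List.cons c) := by
      rintro ⟨s, hs⟩
      injection hs with h1 h2
      exact h h1
    simpa [consL, Finsupp.lmapDomain] using Finsupp.mapDomain_notin_range q _ hr

lemma consL_apply_nil (c : Y) (q : List Y →₀ K) : consL c q [] = 0 := by
  have hr : ([] : List Y) ∉ Set.range (List.cons c) := by
    rintro ⟨s, hs⟩; simp at hs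
  simpa [consL, Finsupp.lmapDomain] using Finsupp.mapDomain_notin_range q _ hr

lemma phi_sum_apply_cons (φ : Y → Y → (Y →₀ K)) (a b : Y) (q : List Y →₀ K) (z : Y) (t : List Y) :
    (((φ a b).sum fun c k => k • consL c q) : List Y →₀ K) (z :: t) = (φ a b) z * q t := by
  rw [Finsupp.sum_apply]
  rw [Finsupp.sum]
  have : ∀ c ∈ (φ a b).support,
      ((φ a b) c • consL c q) (z :: t) = if c = z then (φ a b) c * q t else 0 := by
    intro c _
    rw [Finsupp.smul_apply, consL_apply_cons]
    by_cases h : c = z <;> simp [h]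
  rw [Finset.sum_congr rfl this, Finset.sum_ite_eq' ((φ a b).support) z (fun c => (φ a b) c * q t)]
  by_cases hz : z ∈ (φ a b).support
  · rw [if_pos hz]
  · rw [if_neg hz]
    rw [Finsupp.notMem_support_iff.mp hz, zero_mul]

lemma phi_sum_apply_nil (φ : Y → Y → (Y →₀ K)) (a b : Y) (q : List Y →₀ K) :
    (((φ a b).sum fun c k => k • consL c q) : List Y →₀ K) [] = 0 := by
  rw [Finsupp.sum_apply, Finsupp.sum]
  apply Finset.sum_eq_zero
  intro c _
  rw [Finsupp.smul_apply, consL_apply_nil, smul_zero]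

end AuxBasic

section AuxM

variable {φ : Y → Y → (Y →₀ K)} {m : (List Y →₀ K) →ₗ[K] (List Y →₀ K) →ₗ[K] (List Y →₀ K)}
variable (hm : IsPhiShuffle φ m)
include hm

lemma m_apply_nil (u v : List Y) :
    (m (word u) (word v)) [] = if u = [] ∧ v = [] then 1 else 0 := by
  match u, v with
  | [], v => rw [hm.1]; simp [word_apply, eq_comm]
  | (a :: u'), [] => rw [hm.2.1]; simp [word_apply]
  | (a :: u'), (b :: v') =>
    rw [hm.2.2]
    simp only [Finsupp.add_apply, consL_apply_nil, phi_sum_apply_nil]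
    simp

lemma m_cons_cons_apply (a b : Y) (u v : List Y) (z : Y) (t : List Y) :
    (m (word (a :: u)) (word (b :: v))) (z :: t) =
      (if a = z then (m (word u) (word (b :: v))) t else 0) +
      (if b = z then (m (word (a :: u)) (word v)) t else 0) +
      (φ a b) z * (m (word u) (word v)) t := by
  rw [hm.2.2]
  simp only [Finsupp.add_apply, consL_apply_cons, phi_sum_apply_cons]

end AuxM
section AuxPair

lemma pairPS_zero (S : List Y → K) : pairPS S 0 = 0 := by
  simp [pairPS]

lemma pairPS_add (S : List Y → K) (p q : List Y →₀ K) :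
    pairPS S (p + q) = pairPS S p + pairPS S q := by
  unfold pairPS
  rw [Finsupp.sum_add_index']
  · intro w; exact zero_mul _
  · intro w a b; exact add_mul a b _

lemma pairPS_smul (S : List Y → K) (c : K) (p : List Y →₀ K) :
    pairPS S (c • p) = c * pairPS S p := by
  unfold pairPS
  rw [Finsupp.sum_smul_index fun w => (zero_mul (S w) : (0:K) * S w = 0), Finsupp.mul_sum]
  apply Finsupp.sum_congr
  intro w _
  ring

lemma pairPS_word (S : List Y → K) (w : List Y) : pairPS S (word w) = S w := by
  unfold pairPS word
  rw [Finsupp.sum_single_index (zero_mul (S w) : (0:K) * S w = 0), one_mul]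

lemma pairPS_eq_sum (S : List Y → K) (p : List Y →₀ K) (A : Finset (List Y))
    (hA : p.support ⊆ A) : pairPS S p = ∑ w ∈ A, p w * S w := by
  unfold pairPS Finsupp.sum
  exact Finset.sum_subset hA (fun w _ hw => by simp [Finsupp.notMem_support_iff.mp hw])

lemma pairPS_poly_eq_sum (p r : List Y →₀ K) (A : Finset (List Y))
    (hA : r.support ∩ p.support ⊆ A) :
    (∑ x ∈ A, r x * p x) = pairPS (fun t => p t) r := by
  rw [pairPS_eq_sum (fun t => p t) r (A ∪ r.support) Finset.subset_union_right]
  apply Finset.sum_subset Finset.subset_union_left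
  intro x _ hx
  by_cases h1 : x ∈ r.support
  · by_cases h2 : x ∈ p.support
    · exact absurd (hA (Finset.mem_inter.mpr ⟨h1, h2⟩)) hx
    · rw [Finsupp.notMem_support_iff.mp h2, mul_zero]
  · rw [Finsupp.notMem_support_iff.mp h1, zero_mul]

lemma pairPS_word_right (x : List Y) (r : List Y →₀ K) :
    pairPS (fun t => (word x : List Y →₀ K) t) r = r x := by
  rw [← pairPS_poly_eq_sum (word x) r {x} (Finset.inter_subset_right.trans (by
    intro y hy
    rcases Finsupp.mem_support_iff.mp hy with h
    rw [word_apply] at h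
    simp only [Finset.mem_singleton]
    by_contra hne
    exact h (by rw [if_neg (fun he => hne he.symm)])))]
  rw [Finset.sum_singleton, word_apply, if_pos rfl, mul_one]

lemma pair_sum_eq (Q r : List Y →₀ K) (A : Finset (List Y))
    (hA : Q.support ∩ r.support ⊆ A) :
    (∑ t ∈ A, Q t * r t) = pairPS (fun t => Q t) r := by
  rw [← pairPS_poly_eq_sum Q r A (by rwa [Finset.inter_comm])]
  exact Finset.sum_congr rfl fun x _ => mul_comm _ _

end AuxPair

section AuxConc

lemma concP_zero_right (p : List Y →₀ K) : concP p 0 = 0 := by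
  simp [concP]

lemma concP_zero_left (q : List Y →₀ K) : concP 0 q = 0 := by
  simp [concP]

lemma concP_single_single (u v : List Y) (a b : K) :
    concP (Finsupp.single u a) (Finsupp.single v b) = Finsupp.single (u ++ v) (a * b) := by
  unfold concP
  rw [Finsupp.sum_single_index, Finsupp.sum_single_index]
  · rw [mul_zero, Finsupp.single_zero]
  · rw [Finsupp.sum_single_index] <;> simp

lemma concP_add_left (p₁ p₂ q : List Y →₀ K) :
    concP (p₁ + p₂) q = concP p₁ q + concP p₂ q := by
  unfold concP
  rw [Finsupp.sum_add_index']
  · intro u; simp only [zero_mul, Finsupp.single_zero, Finsupp.sum, Finset.sum_const_zero]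
  · intro u a₁ a₂
    rw [← Finsupp.sum_add]
    apply Finsupp.sum_congr
    intro v _
    rw [add_mul, Finsupp.single_add]

lemma concP_add_right (p q₁ q₂ : List Y →₀ K) :
    concP p (q₁ + q₂) = concP p q₁ + concP p q₂ := by
  unfold concP
  rw [← Finsupp.sum_add]
  apply Finsupp.sum_congr
  intro u _
  rw [Finsupp.sum_add_index']
  · intro v; rw [mul_zero, Finsupp.single_zero]
  · intro v b₁ b₂; rw [mul_add, Finsupp.single_add]

lemma concP_smul_left (c : K) (p q : List Y →₀ K) : concP (c • p) q = c • concP p q := by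
  unfold concP
  rw [Finsupp.sum_smul_index, Finsupp.smul_sum]
  · apply Finsupp.sum_congr
    intro u _
    rw [Finsupp.smul_sum]
    apply Finsupp.sum_congr
    intro v _
    rw [Finsupp.smul_single, smul_eq_mul, mul_assoc]
  · intro u
    simp only [zero_mul, Finsupp.single_zero, Finsupp.sum, Finset.sum_const_zero]

lemma concP_apply (p q : List Y →₀ K) (w : List Y) :
    concP p q w = ∑ i ∈ Finset.range (w.length + 1), p (w.take i) * q (w.drop i) := by
  induction p using Finsupp.induction_linear with
  | zero => simp [concP_zero_left]
  | add p₁ p₂ h₁ h₂ =>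
      rw [concP_add_left, Finsupp.add_apply, h₁, h₂, ← Finset.sum_add_distrib]
      apply Finset.sum_congr rfl
      intro i _
      rw [Finsupp.add_apply, add_mul]
  | single u a =>
    induction q using Finsupp.induction_linear with
    | zero => simp [concP_zero_right]
    | add q₁ q₂ h₁ h₂ =>
        rw [concP_add_right, Finsupp.add_apply, h₁, h₂, ← Finset.sum_add_distrib]
        apply Finset.sum_congr rfl
        intro i _
        rw [Finsupp.add_apply, mul_add]
    | single v b =>
        rw [concP_single_single]
        by_cases h : u ++ v = w
        · have hlen : u.length ∈ Finset.range (w.length + 1) := by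
            subst h
            simp [Finset.mem_range, Nat.lt_succ_iff]
          have h0 : ∀ i ∈ Finset.range (w.length + 1), i ≠ u.length →
              (Finsupp.single u a : List Y →₀ K) (w.take i) *
                (Finsupp.single v b : List Y →₀ K) (w.drop i) = 0 := by
            intro i hi hne
            rw [Finsupp.single_apply]
            rw [if_neg, zero_mul]
            intro he
            apply hne
            have hh : (w.take i).length = i := by
              rw [List.length_take]
              exact Nat.min_eq_left (Nat.lt_succ_iff.mp (Finset.mem_range.mp hi))
            rw [← he] at hh
            exact hh.symm
          rw [Finsupp.single_apply, if_pos h, Finset.sum_eq_single_of_mem u.length hlen h0]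
          subst h
          rw [List.take_left, List.drop_left, Finsupp.single_apply, if_pos rfl,
            Finsupp.single_apply, if_pos rfl]
        · rw [Finsupp.single_apply, if_neg h]
          symm
          apply Finset.sum_eq_zero
          intro i _
          rw [Finsupp.single_apply, Finsupp.single_apply]
          by_cases h1 : u = w.take i
          · by_cases h2 : v = w.drop i
            · exfalso; apply h; rw [h1, h2, List.take_append_drop]
            · rw [if_neg h2, mul_zero]
          · rw [if_neg h1, zero_mul]

lemma concP_nil_word (q : List Y →₀ K) : concP (word []) q = q := by
  unfold concP word
  rw [Finsupp.sum_single_index]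
  · conv_rhs => rw [← Finsupp.sum_single q]
    apply Finsupp.sum_congr
    intro v _
    rw [one_mul, List.nil_append]
  · simp only [zero_mul, Finsupp.single_zero, Finsupp.sum, Finset.sum_const_zero]

lemma concP_word_nil (p : List Y →₀ K) : concP p (word []) = p := by
  unfold concP word
  conv_rhs => rw [← Finsupp.sum_single p]
  apply Finsupp.sum_congr
  intro u _
  rw [Finsupp.sum_single_index]
  · rw [List.append_nil, mul_one]
  · rw [mul_zero, Finsupp.single_zero]

lemma concP_assoc (p q r : List Y →₀ K) : concP (concP p q) r = concP p (concP q r) := by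
  induction p using Finsupp.induction_linear with
  | zero => simp [concP_zero_left]
  | add p₁ p₂ h₁ h₂ => rw [concP_add_left, concP_add_left, concP_add_left, h₁, h₂]
  | single u a =>
    induction q using Finsupp.induction_linear with
    | zero => simp [concP_zero_left, concP_zero_right]
    | add q₁ q₂ h₁ h₂ =>
        rw [concP_add_right, concP_add_left, concP_add_left, concP_add_right, h₁, h₂]
    | single v b =>
      induction r using Finsupp.induction_linear with
      | zero => simp [concP_zero_right]
      | add r₁ r₂ h₁ h₂ =>
          rw [concP_add_right, concP_add_right, concP_add_right, h₁, h₂]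
      | single t c =>
          rw [concP_single_single, concP_single_single, concP_single_single,
            concP_single_single, List.append_assoc, mul_assoc]

lemma concPow_succ (P : List Y →₀ K) (n : ℕ) : concPow P (n + 1) = concP P (concPow P n) := rfl

lemma concPow_add (P : List Y →₀ K) (i j : ℕ) :
    concP (concPow P i) (concPow P j) = concPow P (i + j) := by
  induction i with
  | zero =>
      rw [Nat.zero_add, show concPow P 0 = word [] from rfl, concP_nil_word]
  | succ i ih =>
      rw [concPow_succ, concP_assoc, ih, show i + 1 + j = (i + j) + 1 by omega, concPow_succ]

lemma concPow_one (P : List Y →₀ K) : concPow P 1 = P := by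
  rw [concPow_succ]
  exact concP_word_nil P

section withP
variable {P : List Y →₀ K} (hP0 : P [] = 0)
include hP0

lemma concPow_nil (k : ℕ) : concPow P k [] = if k = 0 then 1 else 0 := by
  cases k with
  | zero => simp [concPow, word_apply]
  | succ n =>
      rw [concPow_succ, concP_apply]
      simp only [List.length_nil, List.take_nil, List.drop_nil]
      simp [hP0]

lemma concPow_eq_zero_of_short {k : ℕ} {w : List Y} (h : w.length < k) : concPow P k w = 0 := by
  induction k generalizing w with
  | zero => omega
  | succ n ih =>
      rw [concPow_succ, concP_apply]
      apply Finset.sum_eq_zero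
      intro i hi
      cases i with
      | zero => simp [hP0]
      | succ i' =>
          have hir := Finset.mem_range.mp hi
          rw [ih (w := w.drop (i' + 1)) (by rw [List.length_drop]; omega), mul_zero]

end withP

end AuxConc
section AuxList

lemma list_sum_eq_zero {α : Type*} {L : List α} {f : α → K} (h : ∀ x ∈ L, f x = 0) :
    (L.map f).sum = 0 := by
  induction L with
  | nil => rfl
  | cons a L ih =>
      simp only [List.map_cons, List.sum_cons, h a (List.mem_cons_self),
        ih fun x hx => h x (List.mem_cons_of_mem a hx), add_zero]

lemma list_sum_map_add {α : Type*} (L : List α) (f g : α → K) :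
    (L.map fun x => f x + g x).sum = (L.map f).sum + (L.map g).sum := by
  induction L with
  | nil => simp
  | cons a L ih => simp only [List.map_cons, List.sum_cons, ih]; ring

lemma list_sum_map_mul_left {α : Type*} (L : List α) (c : K) (f : α → K) :
    (L.map fun x => c * f x).sum = c * (L.map f).sum := by
  induction L with
  | nil => simp
  | cons a L ih => simp only [List.map_cons, List.sum_cons, ih]; ring

lemma list_sum_map_sum {α β : Type*} (L : List α) (s : Finset β) (f : β → α → K) :
    (L.map fun x => ∑ i ∈ s, f i x).sum = ∑ i ∈ s, (L.map fun x => f i x).sum := by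
  induction L with
  | nil => simp
  | cons a L ih => simp only [List.map_cons, List.sum_cons, ih, Finset.sum_add_distrib]

lemma list_sum_flatMap {α β : Type*} (L : List α) (h : α → List β) (F : β → K) :
    ((L.flatMap h).map F).sum = (L.map fun x => ((h x).map F).sum).sum := by
  induction L with
  | nil => simp
  | cons a L ih => simp [List.flatMap_cons, ih]

end AuxList

section AuxCuts

lemma cuts_nil : cuts ([] : List Y) = [[]] := rfl

lemma cuts_cons (a : Y) (w : List Y) : cuts (a :: w) = (cuts w).flatMap (fun parts =>
    match parts with
    | [] => [[[a]]]
    | p :: ps => [[a] :: p :: ps, (a :: p) :: ps]) := rfl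

lemma cuts_ne_nil {a : Y} {w : List Y} {parts : List (List Y)} (h : parts ∈ cuts (a :: w)) :
    parts ≠ [] := by
  rw [cuts_cons, List.mem_flatMap] at h
  obtain ⟨q, -, hq⟩ := h
  cases q with
  | nil =>
      simp only [List.mem_singleton] at hq
      subst hq
      exact List.cons_ne_nil _ _
  | cons p ps =>
      simp only [List.mem_cons, List.mem_singleton, List.not_mem_nil, or_false] at hq
      rcases hq with h2 | h2 <;> subst h2 <;> exact List.cons_ne_nil _ _

lemma cuts_length_le : ∀ {w : List Y} {parts : List (List Y)},
    parts ∈ cuts w → parts.length ≤ w.length := by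
  intro w
  induction w with
  | nil =>
      intro parts h
      rw [cuts_nil, List.mem_singleton] at h
      subst h
      simp
  | cons a w ih =>
      intro parts h
      rw [cuts_cons, List.mem_flatMap] at h
      obtain ⟨q, hq1, hq2⟩ := h
      have hlq := ih hq1
      cases q with
      | nil =>
          simp only [List.mem_singleton] at hq2
          subst hq2
          simp
      | cons p ps =>
          simp only [List.mem_cons, List.mem_singleton, List.not_mem_nil, or_false] at hq2
          rcases hq2 with h2 | h2 <;> subst h2 <;> simp at hlq ⊢ <;> omega

lemma cuts_split (w : List Y) (f : List Y → K) (G : List (List Y) → K) :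
    ((cuts w).map fun parts => match parts with
      | [] => (0:K)
      | u :: ps => f u * G ps).sum =
    ∑ i ∈ Finset.range w.length,
      f (w.take (i+1)) * ((cuts (w.drop (i+1))).map G).sum := by
  induction w generalizing f with
  | nil => simp [cuts_nil]
  | cons a w ih =>
      have lhs_eq : ((cuts (a :: w)).map fun parts => match parts with
          | [] => (0:K) | u :: ps => f u * G ps).sum
          = ((cuts w).map fun parts =>
              f [a] * G parts + (match parts with
                | [] => (0:K) | p :: ps => f (a :: p) * G ps)).sum := by
        rw [cuts_cons, list_sum_flatMap]
        congr 1
        apply List.map_congr_left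
        intro parts _
        cases parts with
        | nil => simp
        | cons p ps => simp
      rw [lhs_eq, list_sum_map_add, list_sum_map_mul_left, ih (fun x => f (a :: x))]
      rw [show (a :: w).length = w.length + 1 from rfl, Finset.sum_range_succ']
      simp only [List.take_succ_cons, List.drop_succ_cons, List.take_zero, List.drop_zero]
      ring
end AuxCuts
namespace EulerAux
open PowerSeries

noncomputable def uu : PowerSeries ℚ := PowerSeries.exp ℚ - 1

lemma coeff_uu (i : ℕ) : PowerSeries.coeff i uu = if i = 0 then 0 else (1:ℚ) / (i.factorial : ℚ) := by
  unfold uu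
  rw [map_sub, PowerSeries.coeff_exp]
  cases i with
  | zero => simp
  | succ n => simp [PowerSeries.coeff_one]

lemma constantCoeff_uu : PowerSeries.constantCoeff uu = 0 := by
  rw [← PowerSeries.coeff_zero_eq_constantCoeff, coeff_uu]
  simp

lemma X_dvd_uu : (PowerSeries.X : PowerSeries ℚ) ∣ uu :=
  PowerSeries.X_dvd_iff.mpr constantCoeff_uu

lemma coeff_uu_pow_eq_zero {k j : ℕ} (h : k < j) : PowerSeries.coeff k (uu ^ j) = 0 :=
  (PowerSeries.X_pow_dvd_iff.mp (pow_dvd_pow_of_dvd X_dvd_uu j)) k h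

noncomputable def s (k j : ℕ) : ℚ := (k.factorial : ℚ) * PowerSeries.coeff k (uu ^ j)

lemma s_k_zero (k : ℕ) : s k 0 = if k = 0 then 1 else 0 := by
  unfold s
  rw [pow_zero, PowerSeries.coeff_one]
  cases k with
  | zero => simp
  | succ n => simp

lemma s_zero (j : ℕ) : s 0 j = if j = 0 then 1 else 0 := by
  unfold s
  cases j with
  | zero => simp
  | succ n =>
      rw [PowerSeries.coeff_zero_eq_constantCoeff, map_pow, constantCoeff_uu]
      simp

lemma s_of_lt {k j : ℕ} (h : k < j) : s k j = 0 := by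
  unfold s
  rw [coeff_uu_pow_eq_zero h, mul_zero]

lemma s_succ (k j : ℕ) : s k (j+1) =
    (∑ p ∈ Finset.HasAntidiagonal.antidiagonal k, (k.choose p.1 : ℚ) * s p.2 j) - s k j := by
  have hpick : ∑ p ∈ Finset.HasAntidiagonal.antidiagonal k,
      (if p.1 = 0 then ((k.choose p.1 : ℚ) * s p.2 j) else 0) = s k j := by
    rw [Finset.sum_eq_single_of_mem (0, k) (Finset.HasAntidiagonal.mem_antidiagonal.mpr (zero_add k))]
    · simp
    · intro p hp hne
      rw [if_neg]
      intro h0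
      apply hne
      have hm := Finset.HasAntidiagonal.mem_antidiagonal.mp hp
      rw [h0, zero_add] at hm
      exact Prod.ext h0 hm
  have hterm : ∀ p ∈ Finset.HasAntidiagonal.antidiagonal k,
      (k.factorial : ℚ) * (PowerSeries.coeff p.1 uu * PowerSeries.coeff p.2 (uu ^ j))
      = (k.choose p.1 : ℚ) * s p.2 j
        - (if p.1 = 0 then ((k.choose p.1 : ℚ) * s p.2 j) else 0) := by
    intro p hp
    have hpk := Finset.HasAntidiagonal.mem_antidiagonal.mp hp
    rw [coeff_uu]
    by_cases h0 : p.1 = 0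
    · rw [if_pos h0, if_pos h0]
      simp only [zero_mul, mul_zero]
      ring
    · rw [if_neg h0, if_neg h0, sub_zero]
      unfold s
      have hfacn : k.choose p.1 * p.1.factorial * p.2.factorial = k.factorial := by
        have h := Nat.choose_mul_factorial_mul_factorial
          (show p.1 ≤ k from hpk ▸ Nat.le_add_right p.1 p.2)
        rw [show k - p.1 = p.2 by omega] at h
        exact h
      have hfac : (k.choose p.1 : ℚ) * p.1.factorial * p.2.factorial = k.factorial := by
        rw [← hfacn]
        push_cast
        ring
      have hf1 : (p.1.factorial : ℚ) ≠ 0 := Nat.cast_ne_zero.mpr (Nat.factorial_ne_zero _)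
      field_simp
      rw [← hfac]
      ring
  have lhs_eq : s k (j+1) = ∑ p ∈ Finset.HasAntidiagonal.antidiagonal k,
      (k.factorial : ℚ) * (PowerSeries.coeff p.1 uu * PowerSeries.coeff p.2 (uu ^ j)) := by
    unfold s
    rw [pow_succ', PowerSeries.coeff_mul, Finset.mul_sum]
  rw [lhs_eq, Finset.sum_congr rfl hterm, Finset.sum_sub_distrib, hpick]

noncomputable def cq (j : ℕ) : ℚ := (-1)^(j-1) / j

lemma derivative_exp : (PowerSeries.derivative ℚ) (PowerSeries.exp ℚ) = PowerSeries.exp ℚ := by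
  ext n
  rw [PowerSeries.coeff_derivative]
  simp only [PowerSeries.coeff_exp, Nat.factorial_succ, Algebra.algebraMap_self, RingHom.id_apply]
  push_cast
  field_simp

lemma derivative_uu : (PowerSeries.derivative ℚ) uu = PowerSeries.exp ℚ := by
  unfold uu
  rw [map_sub, derivative_exp]
  simp

lemma exp_eq : PowerSeries.exp ℚ = 1 + uu := by
  unfold uu
  ring

lemma key_scalar (k N : ℕ) (hk1 : 1 ≤ k) (hk : k ≤ N) :
    ∑ j ∈ Finset.range (N+1), cq j * s k j = if k = 1 then 1 else 0 := by
  set A : PowerSeries ℚ := ∑ j ∈ Finset.range (N+1), PowerSeries.C (cq j) * uu ^ j with hA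
  have hsum : ∑ j ∈ Finset.range (N+1), cq j * s k j
      = (k.factorial : ℚ) * PowerSeries.coeff k A := by
    rw [hA, map_sum, Finset.mul_sum]
    apply Finset.sum_congr rfl
    intro j _
    rw [PowerSeries.coeff_C_mul]
    unfold s
    ring
  have hder : (PowerSeries.derivative ℚ) A = 1 - (-uu)^N := by
    rw [hA, map_sum]
    have hterm : ∀ j ∈ Finset.range (N+1),
        (PowerSeries.derivative ℚ) (PowerSeries.C (cq j) * uu ^ j)
        = (if j = 0 then 0
           else PowerSeries.C ((-1:ℚ)^(j-1)) * uu^(j-1) * PowerSeries.exp ℚ) := by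
      intro j _
      rw [Derivation.leibniz, PowerSeries.derivative_C, smul_zero, add_zero]
      cases j with
      | zero => simp
      | succ i =>
          rw [if_neg (Nat.succ_ne_zero i), Derivation.leibniz_pow, derivative_uu,
            Nat.add_sub_cancel]
          rw [smul_eq_mul, smul_eq_mul, nsmul_eq_mul]
          have hc : cq (i+1) * ((i+1 : ℕ) : ℚ) = (-1:ℚ)^i := by
            unfold cq
            have hne : ((i+1 : ℕ) : ℚ) ≠ 0 := by positivity
            rw [Nat.add_sub_cancel]
            field_simp
          calc (PowerSeries.C) (cq (i+1)) * (((i+1:ℕ) : PowerSeries ℚ) * (uu^i * PowerSeries.exp ℚ))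
              = ((PowerSeries.C) (cq (i+1)) * (PowerSeries.C) (((i+1:ℕ):ℚ))) * (uu^i * PowerSeries.exp ℚ) := by
                rw [map_natCast]; ring
            _ = PowerSeries.C ((-1:ℚ)^i) * uu^i * PowerSeries.exp ℚ := by
                rw [← map_mul, hc]; ring
    rw [Finset.sum_congr rfl hterm, Finset.sum_range_succ', if_pos rfl, add_zero]
    have hre : ∀ i, (if i + 1 = 0 then (0 : PowerSeries ℚ)
        else PowerSeries.C ((-1:ℚ)^(i+1-1)) * uu^(i+1-1) * PowerSeries.exp ℚ)
        = (-uu)^i * PowerSeries.exp ℚ := by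
      intro i
      rw [if_neg (Nat.succ_ne_zero i), Nat.add_sub_cancel]
      congr 1
      rw [map_pow, map_neg, map_one, neg_pow]
      ring
    rw [Finset.sum_congr rfl (fun i _ => hre i), ← Finset.sum_mul, exp_eq]
    have hgeom := geom_sum_mul (-uu) N
    linear_combination (-1 : PowerSeries ℚ) * hgeom
  have hcoeff : PowerSeries.coeff k A * (k : ℚ) = if k = 1 then 1 else 0 := by
    have hkk : k - 1 + 1 = k := by omega
    have h1 : PowerSeries.coeff (k-1) ((PowerSeries.derivative ℚ) A)
        = PowerSeries.coeff k A * (k : ℚ) := by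
      rw [PowerSeries.coeff_derivative, hkk, Nat.cast_sub hk1]
      push_cast
      ring
    rw [hder, map_sub, PowerSeries.coeff_one] at h1
    have h2 : PowerSeries.coeff (k-1) ((-uu)^N) = 0 := by
      rw [neg_pow, show ((-1 : PowerSeries ℚ))^N = PowerSeries.C ((-1)^N) by
          rw [map_pow, map_neg, map_one],
        PowerSeries.coeff_C_mul, coeff_uu_pow_eq_zero (by omega), mul_zero]
    rw [h2, sub_zero] at h1
    rw [← h1]
    by_cases hk1' : k = 1
    · subst hk1'; simp
    · rw [if_neg (by omega), if_neg hk1']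
  rw [hsum]
  rcases eq_or_ne k 1 with h1 | h1
  · subst h1
    rw [if_pos rfl] at hcoeff ⊢
    rw [Nat.cast_one, mul_one] at hcoeff
    rw [hcoeff]
    norm_num
  · rw [if_neg h1] at hcoeff ⊢
    rcases mul_eq_zero.mp hcoeff with hc | hc
    · rw [hc, mul_zero]
    · exfalso
      have : (k:ℚ) ≠ 0 := Nat.cast_ne_zero.mpr (by omega)
      exact this hc

end EulerAux
section AuxHopf

lemma word_split (v w1 w2 : List Y) :
    (word v : List Y →₀ K) (w1 ++ w2) =
    ∑ j ∈ Finset.range (v.length + 1),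
      (word (v.take j) : List Y →₀ K) w1 * (word (v.drop j) : List Y →₀ K) w2 := by
  by_cases h : v = w1 ++ w2
  · rw [word_apply, if_pos h]
    have hlen : w1.length ∈ Finset.range (v.length + 1) := by
      subst h
      simp [Finset.mem_range, Nat.lt_succ_iff]
    have h0 : ∀ j ∈ Finset.range (v.length + 1), j ≠ w1.length →
        (word (v.take j) : List Y →₀ K) w1 * (word (v.drop j) : List Y →₀ K) w2 = 0 := by
      intro j hj hne
      rw [word_apply, if_neg, zero_mul]
      intro he
      apply hne
      have hh : (v.take j).length = j := by
        rw [List.length_take]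
        exact Nat.min_eq_left (Nat.lt_succ_iff.mp (Finset.mem_range.mp hj))
      rw [he] at hh
      omega
    rw [Finset.sum_eq_single_of_mem w1.length hlen h0]
    subst h
    rw [List.take_left, List.drop_left, word_apply, if_pos rfl, word_apply, if_pos rfl, mul_one]
  · rw [word_apply, if_neg h]
    symm
    apply Finset.sum_eq_zero
    intro j _
    rw [word_apply, word_apply]
    by_cases h1 : v.take j = w1
    · by_cases h2 : v.drop j = w2
      · exfalso
        apply h
        rw [← h1, ← h2, List.take_append_drop]
      · rw [if_neg h2, mul_zero]
    · rw [if_neg h1, zero_mul]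

variable {φ : Y → Y → (Y →₀ K)} {m : (List Y →₀ K) →ₗ[K] (List Y →₀ K) →ₗ[K] (List Y →₀ K)}
variable (hm : IsPhiShuffle φ m)
include hm

lemma hopf_compat : ∀ (w1 u v w2 : List Y),
    (m (word u) (word v)) (w1 ++ w2) =
    ∑ i ∈ Finset.range (u.length + 1), ∑ j ∈ Finset.range (v.length + 1),
      (m (word (u.take i)) (word (v.take j))) w1 *
        (m (word (u.drop i)) (word (v.drop j))) w2 := by
  intro w1
  induction w1 with
  | nil =>
      intro u v w2
      rw [List.nil_append]
      symm
      have hin : ∀ n : ℕ, 0 ∈ Finset.range (n + 1) := fun n => Finset.mem_range.mpr (Nat.succ_pos n)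
      rw [Finset.sum_eq_single_of_mem 0 (hin u.length) ?hi]
      case hi =>
        intro i hi hne
        apply Finset.sum_eq_zero
        intro j hj
        rw [m_apply_nil hm, if_neg, zero_mul]
        rintro ⟨h1, -⟩
        have hlen := congrArg List.length h1
        rw [List.length_take] at hlen
        simp only [List.length_nil] at hlen
        have := Finset.mem_range.mp hi
        omega
      rw [Finset.sum_eq_single_of_mem 0 (hin v.length) ?hj]
      case hj =>
        intro j hj hne
        rw [m_apply_nil hm, if_neg, zero_mul]
        rintro ⟨-, h2⟩
        have hlen := congrArg List.length h2
        rw [List.length_take] at hlen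
        simp only [List.length_nil] at hlen
        have := Finset.mem_range.mp hj
        omega
      rw [List.take_zero, List.take_zero, List.drop_zero, List.drop_zero, m_apply_nil hm,
        if_pos ⟨rfl, rfl⟩, one_mul]
  | cons z w1' ih =>
      intro u v w2
      match u, v with
      | [], v =>
          rw [hm.1, word_split]
          simp only [List.length_nil, zero_add, Finset.sum_range_one, List.take_nil, List.drop_nil]
          apply Finset.sum_congr rfl
          intro j _
          rw [hm.1, hm.1]
      | (a :: u'), [] =>
          rw [hm.2.1, word_split]
          simp only [List.length_nil, zero_add, Finset.sum_range_one, List.take_nil, List.drop_nil]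
          apply Finset.sum_congr rfl
          intro i _
          rw [hm.2.1, hm.2.1]
      | (a :: u'), (b :: v') =>
          rw [List.cons_append, m_cons_cons_apply hm, ih u' (b::v') w2, ih (a::u') v' w2,
            ih u' v' w2]
          have hL1 : (∑ i ∈ Finset.range (u'.length + 1),
                ∑ j ∈ Finset.range ((b::v').length + 1),
                (m (word (List.take i u')) (word (List.take j (b::v')))) w1' *
                  (m (word (List.drop i u')) (word (List.drop j (b::v')))) w2)
              = (∑ i ∈ Finset.range (u'.length + 1), ∑ j ∈ Finset.range (v'.length + 1),
                  (m (word (List.take i u')) (word (b :: List.take j v'))) w1' *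
                    (m (word (List.drop i u')) (word (List.drop j v'))) w2)
                + ∑ i ∈ Finset.range (u'.length + 1),
                    (word (List.take i u') : List Y →₀ K) w1' *
                      (m (word (List.drop i u')) (word (b :: v'))) w2 := by
            rw [← Finset.sum_add_distrib]
            apply Finset.sum_congr rfl
            intro i _
            rw [show (b::v').length = v'.length + 1 from rfl, Finset.sum_range_succ']
            simp only [List.take_succ_cons, List.drop_succ_cons, List.take_zero,
              List.drop_zero, hm.2.1]
          have hL2 : (∑ i ∈ Finset.range ((a::u').length + 1),
                ∑ j ∈ Finset.range (v'.length + 1),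
                (m (word (List.take i (a::u'))) (word (List.take j v'))) w1' *
                  (m (word (List.drop i (a::u'))) (word (List.drop j v'))) w2)
              = (∑ i ∈ Finset.range (u'.length + 1), ∑ j ∈ Finset.range (v'.length + 1),
                  (m (word (a :: List.take i u')) (word (List.take j v'))) w1' *
                    (m (word (List.drop i u')) (word (List.drop j v'))) w2)
                + ∑ j ∈ Finset.range (v'.length + 1),
                    (word (List.take j v') : List Y →₀ K) w1' *
                      (m (word (a :: u')) (word (List.drop j v'))) w2 := by
            rw [show (a::u').length = u'.length + 1 from rfl, Finset.sum_range_succ']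
            simp only [List.take_succ_cons, List.drop_succ_cons, List.take_zero,
              List.drop_zero, hm.1]
          have hR : (∑ i ∈ Finset.range ((a::u').length + 1),
                ∑ j ∈ Finset.range ((b::v').length + 1),
                (m (word (List.take i (a::u'))) (word (List.take j (b::v')))) (z :: w1') *
                  (m (word (List.drop i (a::u'))) (word (List.drop j (b::v')))) w2)
              = (∑ i ∈ Finset.range (u'.length + 1),
                  ((∑ j ∈ Finset.range (v'.length + 1),
                    ((if a = z then (1:K) else 0) *
                        ((m (word (List.take i u')) (word (b :: List.take j v'))) w1' *
                          (m (word (List.drop i u')) (word (List.drop j v'))) w2)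
                      + (if b = z then (1:K) else 0) *
                        ((m (word (a :: List.take i u')) (word (List.take j v'))) w1' *
                          (m (word (List.drop i u')) (word (List.drop j v'))) w2)
                      + φ a b z *
                        ((m (word (List.take i u')) (word (List.take j v'))) w1' *
                          (m (word (List.drop i u')) (word (List.drop j v'))) w2)))
                    + (if a = z then (1:K) else 0) *
                        ((word (List.take i u') : List Y →₀ K) w1' *
                          (m (word (List.drop i u')) (word (b :: v'))) w2)))
                + ∑ j ∈ Finset.range (v'.length + 1),
                    (if b = z then (1:K) else 0) *
                      ((word (List.take j v') : List Y →₀ K) w1' *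
                        (m (word (a :: u')) (word (List.drop j v'))) w2) := by
            rw [show (a::u').length = u'.length + 1 from rfl, Finset.sum_range_succ']
            congr 1
            · apply Finset.sum_congr rfl
              intro i _
              rw [show (b::v').length = v'.length + 1 from rfl, Finset.sum_range_succ']
              congr 1
              · apply Finset.sum_congr rfl
                intro j _
                rw [List.take_succ_cons, List.take_succ_cons, List.drop_succ_cons,
                  List.drop_succ_cons, m_cons_cons_apply hm]
                by_cases haz : a = z <;> by_cases hbz : b = z <;>
                  simp [haz, hbz, add_mul, mul_assoc]
              · rw [List.take_succ_cons, List.take_zero, List.drop_succ_cons, List.drop_zero,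
                  hm.2.1, word_cons_apply]
                by_cases haz : a = z <;> simp [haz, mul_assoc]
            · rw [show (b::v').length = v'.length + 1 from rfl, Finset.sum_range_succ']
              have hT00 : (m (word (List.take 0 (a::u'))) (word (List.take 0 (b::v')))) (z :: w1') *
                  (m (word (List.drop 0 (a::u'))) (word (List.drop 0 (b::v')))) w2 = 0 := by
                rw [List.take_zero, List.take_zero, hm.1, word_apply]
                simp
              rw [hT00, add_zero]
              apply Finset.sum_congr rfl
              intro j _
              rw [List.take_zero, List.take_succ_cons, List.drop_zero, List.drop_succ_cons,
                hm.1, word_cons_apply]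
              by_cases hbz : b = z <;> simp [hbz, mul_assoc]
          rw [hL1, hL2, hR]
          by_cases haz : a = z <;> by_cases hbz : b = z <;>
            simp [haz, hbz, Finset.sum_add_distrib, mul_add, Finset.mul_sum] <;> ring

end AuxHopf
section AuxPairing

lemma sum_split_eq_mul (F G : List Y → K) (sF sG : Finset (List Y))
    (hF : ∀ x, F x ≠ 0 → x ∈ sF) (hG : ∀ y, G y ≠ 0 → y ∈ sG)
    (D : Finset (List Y)) (hD : ∀ x ∈ sF, ∀ y ∈ sG, x ++ y ∈ D) :
    ∑ w ∈ D, ∑ i ∈ Finset.range (w.length + 1), F (w.take i) * G (w.drop i)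
      = (∑ x ∈ sF, F x) * (∑ y ∈ sG, G y) := by
  classical
  rw [Finset.sum_mul_sum, ← Finset.sum_product', Finset.sum_sigma']
  rw [← Finset.sum_filter_ne_zero (s := (sF ×ˢ sG))]
  rw [← Finset.sum_filter_ne_zero
    (s := (D.sigma fun w => Finset.range (w.length + 1)))]
  apply Finset.sum_bij (i := fun (p : Σ _ : List Y, ℕ) _ => (p.1.take p.2, p.1.drop p.2))
  · intro p hp
    rw [Finset.mem_filter] at hp ⊢
    obtain ⟨hp1, hp2⟩ := hp
    refine ⟨Finset.mem_product.mpr ⟨hF _ fun h => hp2 (by rw [h, zero_mul]),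
      hG _ fun h => hp2 (by rw [h, mul_zero])⟩, hp2⟩
  · intro p hp p' hp' he
    rw [Finset.mem_filter, Finset.mem_sigma] at hp hp'
    have h1 : p.1 = p'.1 := by
      have := congrArg (fun q : List Y × List Y => q.1 ++ q.2) he
      simpa [List.take_append_drop] using this
    have h2 : p.2 = p'.2 := by
      have e1 := congrArg (fun q : List Y × List Y => q.1.length) he
      simp only [List.length_take] at e1
      have l1 := Finset.mem_range.mp hp.1.2
      have l2 := Finset.mem_range.mp hp'.1.2
      have hl : p.1.length = p'.1.length := by rw [h1]
      omega
    exact Sigma.ext h1 (heq_of_eq h2)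
  · intro q hq
    rw [Finset.mem_filter, Finset.mem_product] at hq
    obtain ⟨⟨hq1, hq2⟩, hq3⟩ := hq
    refine ⟨⟨q.1 ++ q.2, q.1.length⟩, ?_, ?_⟩
    · rw [Finset.mem_filter, Finset.mem_sigma]
      refine ⟨⟨hD _ hq1 _ hq2, ?_⟩, ?_⟩
      · rw [Finset.mem_range]
        show q.1.length < (q.1 ++ q.2).length + 1
        rw [List.length_append]
        omega
      · simpa [List.take_left, List.drop_left] using hq3
    · simp [List.take_left, List.drop_left]
  · intro p hp
    rfl

variable {φ : Y → Y → (Y →₀ K)} {m : (List Y →₀ K) →ₗ[K] (List Y →₀ K) →ₗ[K] (List Y →₀ K)}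
variable (hm : IsPhiShuffle φ m)
include hm

lemma pair_conc_shuffle (p q : List Y →₀ K) (u v : List Y) :
    pairPS (fun t => concP p q t) (m (word u) (word v)) =
    ∑ i ∈ Finset.range (u.length + 1), ∑ j ∈ Finset.range (v.length + 1),
      pairPS (fun t => p t) (m (word (u.take i)) (word (v.take j))) *
        pairPS (fun t => q t) (m (word (u.drop i)) (word (v.drop j))) := by
  classical
  set D : Finset (List Y) := (m (word u) (word v)).support ∪
    (p.support ×ˢ q.support).image (fun pr => pr.1 ++ pr.2) with hDdef
  have hsub : (m (word u) (word v)).support ⊆ D := Finset.subset_union_left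
  rw [pairPS_eq_sum _ _ D hsub]
  have step1 : ∀ w ∈ D, (m (word u) (word v)) w * (fun t => concP p q t) w
      = ∑ i ∈ Finset.range (w.length+1), ∑ a ∈ Finset.range (u.length+1),
          ∑ b ∈ Finset.range (v.length+1),
          ((m (word (u.take a)) (word (v.take b))) (w.take i) * p (w.take i)) *
          ((m (word (u.drop a)) (word (v.drop b))) (w.drop i) * q (w.drop i)) := by
    intro w _
    show (m (word u) (word v)) w * concP p q w = _
    rw [concP_apply, Finset.mul_sum]
    apply Finset.sum_congr rfl
    intro i hi
    have hw : (m (word u) (word v)) w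
        = (m (word u) (word v)) (w.take i ++ w.drop i) := by rw [List.take_append_drop]
    rw [hw, hopf_compat hm (w.take i) u v (w.drop i), Finset.sum_mul]
    apply Finset.sum_congr rfl
    intro a _
    rw [Finset.sum_mul]
    apply Finset.sum_congr rfl
    intro b _
    ring
  rw [Finset.sum_congr rfl step1]
  rw [Finset.sum_sigma']
  rw [Finset.sum_comm]
  apply Finset.sum_congr rfl
  intro a _
  rw [Finset.sum_comm]
  apply Finset.sum_congr rfl
  intro b _
  rw [Finset.sum_sigma]
  rw [sum_split_eq_mul
    (fun x => (m (word (u.take a)) (word (v.take b))) x * p x)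
    (fun y => (m (word (u.drop a)) (word (v.drop b))) y * q y)
    p.support q.support
    (fun x hx => Finsupp.mem_support_iff.mpr (by intro h; apply hx; simp [h]))
    (fun y hy => Finsupp.mem_support_iff.mpr (by intro h; apply hy; simp [h]))
    D (fun x hx y hy => Finset.mem_union_right _
      (Finset.mem_image.mpr ⟨(x, y), Finset.mem_product.mpr ⟨hx, hy⟩, rfl⟩))]
  rw [pairPS_poly_eq_sum _ _ _ Finset.inter_subset_right,
    pairPS_poly_eq_sum _ _ _ Finset.inter_subset_right]

lemma pair_pow_shuffle {P : List Y →₀ K} (hP : PrimS m fun w => P w) (hP0 : P [] = 0) :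
    ∀ (k : ℕ) (u v : List Y),
    pairPS (fun t => concPow P k t) (m (word u) (word v)) =
    ∑ ij ∈ Finset.HasAntidiagonal.antidiagonal k,
      (k.choose ij.1 : K) * (concPow P ij.1 u * concPow P ij.2 v) := by
  have hprim : ∀ x y : List Y, pairPS (fun w => P w) (m (word x) (word y)) =
      (if y = [] then P x else 0) + (if x = [] then P y else 0) := fun x y => hP x y
  have htake0 : ∀ (l : List Y) (j : ℕ), j ∈ Finset.range (l.length + 1) →
      ((l.take j = []) = (j = 0)) := by
    intro l j hj
    have hj' := Finset.mem_range.mp hj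
    apply propext
    rw [List.take_eq_nil_iff]
    constructor
    · rintro (h | h)
      · exact h
      · subst h
        simp only [List.length_nil] at hj'
        omega
    · intro h
      exact Or.inl h
  intro k
  induction k with
  | zero =>
      intro u v
      rw [show concPow P 0 = (word [] : List Y →₀ K) from rfl, pairPS_word_right,
        m_apply_nil hm, Finset.Nat.antidiagonal_zero, Finset.sum_singleton]
      rw [show concPow P 0 = (word [] : List Y →₀ K) from rfl, word_apply, word_apply]
      by_cases hu : u = [] <;> by_cases hv : v = [] <;>
        simp [hu, hv, eq_comm]
  | succ k ihk =>
      intro u v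
      rw [show concPow P (k+1) = concP P (concPow P k) from rfl, pair_conc_shuffle hm]
      have step : ∀ i ∈ Finset.range (u.length+1), ∀ j ∈ Finset.range (v.length+1),
          pairPS (fun t => P t) (m (word (u.take i)) (word (v.take j))) *
            pairPS (fun t => concPow P k t) (m (word (u.drop i)) (word (v.drop j)))
          = (if j = 0 then P (u.take i) *
                pairPS (fun t => concPow P k t) (m (word (u.drop i)) (word (v.drop j))) else 0)
            + (if i = 0 then P (v.take j) *
                pairPS (fun t => concPow P k t) (m (word (u.drop i)) (word (v.drop j))) else 0) := by
        intro i hi j hj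
        rw [hprim, add_mul, ite_mul, ite_mul, zero_mul]
        congr 1
        · exact if_congr (iff_of_eq (htake0 v j hj)) rfl rfl
        · exact if_congr (iff_of_eq (htake0 u i hi)) rfl rfl
      rw [Finset.sum_congr rfl (fun i hi => Finset.sum_congr rfl (fun j hj => step i hi j hj))]
      rw [Finset.sum_congr rfl (fun i (hi : i ∈ Finset.range (u.length+1)) =>
        Finset.sum_add_distrib), Finset.sum_add_distrib]
      have hpc1 : ∀ i ∈ Finset.range (u.length+1),
          (∑ j ∈ Finset.range (v.length+1), (if j = 0 then P (u.take i) *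
              pairPS (fun t => concPow P k t) (m (word (u.drop i)) (word (v.drop j))) else 0))
          = P (u.take i) *
              pairPS (fun t => concPow P k t) (m (word (u.drop i)) (word v)) := by
        intro i _
        rw [Finset.sum_ite_eq' (Finset.range (v.length+1)) 0
          (fun j => P (u.take i) * pairPS (fun t => concPow P k t)
            (m (word (u.drop i)) (word (v.drop j))))]
        rw [if_pos (Finset.mem_range.mpr (Nat.succ_pos _)), List.drop_zero]
      have hpc2 : (∑ i ∈ Finset.range (u.length+1), ∑ j ∈ Finset.range (v.length+1),
            (if i = 0 then P (v.take j) *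
              pairPS (fun t => concPow P k t) (m (word (u.drop i)) (word (v.drop j))) else 0))
          = ∑ j ∈ Finset.range (v.length+1), P (v.take j) *
              pairPS (fun t => concPow P k t) (m (word u) (word (v.drop j))) := by
        rw [Finset.sum_comm]
        apply Finset.sum_congr rfl
        intro j _
        rw [Finset.sum_ite_eq' (Finset.range (u.length+1)) 0
          (fun i => P (v.take j) * pairPS (fun t => concPow P k t)
            (m (word (u.drop i)) (word (v.drop j))))]
        rw [if_pos (Finset.mem_range.mpr (Nat.succ_pos _)), List.drop_zero]
      rw [Finset.sum_congr rfl hpc1, hpc2]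
      have hpiece1 : (∑ i ∈ Finset.range (u.length+1), P (u.take i) *
            pairPS (fun t => concPow P k t) (m (word (u.drop i)) (word v)))
          = ∑ xy ∈ Finset.HasAntidiagonal.antidiagonal k, (k.choose xy.1 : K) *
              (concPow P (xy.1+1) u * concPow P xy.2 v) := by
        calc (∑ i ∈ Finset.range (u.length+1), P (u.take i) *
              pairPS (fun t => concPow P k t) (m (word (u.drop i)) (word v)))
            = ∑ i ∈ Finset.range (u.length+1), ∑ xy ∈ Finset.HasAntidiagonal.antidiagonal k,
                (k.choose xy.1 : K) *
                  (P (u.take i) * concPow P xy.1 (u.drop i) * concPow P xy.2 v) := by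
              apply Finset.sum_congr rfl
              intro i _
              rw [ihk, Finset.mul_sum]
              apply Finset.sum_congr rfl
              intro xy _
              ring
          _ = _ := by
              rw [Finset.sum_comm]
              apply Finset.sum_congr rfl
              intro xy _
              rw [show concPow P (xy.1+1) = concP P (concPow P xy.1) from rfl, concP_apply,
                Finset.sum_mul, Finset.mul_sum]
      have hpiece2 : (∑ j ∈ Finset.range (v.length+1), P (v.take j) *
            pairPS (fun t => concPow P k t) (m (word u) (word (v.drop j))))
          = ∑ xy ∈ Finset.HasAntidiagonal.antidiagonal k, (k.choose xy.1 : K) *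
              (concPow P xy.1 u * concPow P (xy.2+1) v) := by
        calc (∑ j ∈ Finset.range (v.length+1), P (v.take j) *
              pairPS (fun t => concPow P k t) (m (word u) (word (v.drop j))))
            = ∑ j ∈ Finset.range (v.length+1), ∑ xy ∈ Finset.HasAntidiagonal.antidiagonal k,
                (k.choose xy.1 : K) *
                  (concPow P xy.1 u * (P (v.take j) * concPow P xy.2 (v.drop j))) := by
              apply Finset.sum_congr rfl
              intro j _
              rw [ihk, Finset.mul_sum]
              apply Finset.sum_congr rfl
              intro xy _
              ring
          _ = _ := by
              rw [Finset.sum_comm]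
              apply Finset.sum_congr rfl
              intro xy _
              rw [show concPow P (xy.2+1) = concP P (concPow P xy.2) from rfl, concP_apply,
                Finset.mul_sum, Finset.mul_sum]
      rw [hpiece1, hpiece2]
      rw [Finset.Nat.sum_antidiagonal_succ
        (f := fun p => ((k+1).choose p.1 : K) * (concPow P p.1 u * concPow P p.2 v))]
      have hps : ∀ p ∈ Finset.HasAntidiagonal.antidiagonal k,
          (((k+1).choose (p.1+1) : ℕ) : K) * (concPow P (p.1+1) u * concPow P p.2 v)
          = (k.choose p.1 : K) * (concPow P (p.1+1) u * concPow P p.2 v)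
            + (k.choose (p.1+1) : K) * (concPow P (p.1+1) u * concPow P p.2 v) := by
        intro p _
        rw [Nat.choose_succ_succ]
        push_cast
        ring
      rw [Finset.sum_congr rfl hps, Finset.sum_add_distrib]
      have h1 := Finset.Nat.sum_antidiagonal_succ (n := k)
        (f := fun p => (k.choose p.1 : K) * (concPow P p.1 u * concPow P p.2 v))
      have h2 := Finset.Nat.sum_antidiagonal_succ' (n := k)
        (f := fun p => (k.choose p.1 : K) * (concPow P p.1 u * concPow P p.2 v))
      have h3 : (∑ p ∈ Finset.HasAntidiagonal.antidiagonal k, (k.choose p.1 : K) *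
            (concPow P p.1 u * concPow P (p.2+1) v))
          = ((k.choose 0 : K) * (concPow P 0 u * concPow P (k+1) v))
            + ∑ p ∈ Finset.HasAntidiagonal.antidiagonal k, (k.choose (p.1+1) : K) *
                (concPow P (p.1+1) u * concPow P p.2 v) := by
        rw [← h1, h2]
        simp [Nat.choose_succ_self]
      rw [h3]
      rw [Nat.choose_zero_right, Nat.choose_zero_right]
      push_cast
      ring

lemma pair_pow_shuffle_poly {P : List Y →₀ K} (hP : PrimS m fun w => P w) (hP0 : P [] = 0)
    (k : ℕ) (u : List Y) (q : List Y →₀ K) :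
    pairPS (fun t => concPow P k t) (m (word u) q) =
    ∑ ij ∈ Finset.HasAntidiagonal.antidiagonal k,
      (k.choose ij.1 : K) * (concPow P ij.1 u * pairPS (fun t => concPow P ij.2 t) q) := by
  induction q using Finsupp.induction_linear with
  | zero =>
      rw [map_zero, pairPS_zero]
      symm
      apply Finset.sum_eq_zero
      intro ij _
      rw [pairPS_zero, mul_zero, mul_zero]
  | add q₁ q₂ h₁ h₂ =>
      rw [map_add, pairPS_add, h₁, h₂, ← Finset.sum_add_distrib]
      apply Finset.sum_congr rfl
      intro ij _
      rw [pairPS_add]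
      ring
  | single w c =>
      rw [show (Finsupp.single w c : List Y →₀ K) = c • word w by
        rw [word, Finsupp.smul_single, smul_eq_mul, mul_one], map_smul, pairPS_smul]
      rw [pair_pow_shuffle hm hP hP0 k u w, Finset.mul_sum]
      apply Finset.sum_congr rfl
      intro ij _
      rw [pairPS_smul, pairPS_word]
      ring

end AuxPairing
section AuxEulerMain

variable {φ : Y → Y → (Y →₀ K)} {m : (List Y →₀ K) →ₗ[K] (List Y →₀ K) →ₗ[K] (List Y →₀ K)}
variable (hm : IsPhiShuffle φ m) {P : List Y →₀ K}
variable (hP : PrimS m fun w => P w) (hP0 : P [] = 0)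
include hm hP hP0

lemma cuts_pow_sum :
    ∀ (j : ℕ) (k : ℕ) (w : List Y),
    ((cuts w).map fun parts => if parts.length = j then
        pairPS (fun t => concPow P k t) (prodM m (parts.map word)) else 0).sum
    = algebraMap ℚ K (EulerAux.s k j) * concPow P k w := by
  intro j
  induction j with
  | zero =>
      intro k w
      cases w with
      | nil =>
          simp only [cuts_nil, List.map_cons, List.map_nil, List.sum_cons, List.sum_nil,
            List.length_nil, if_true, add_zero]
          rw [show prodM m ([] : List (List Y →₀ K)) = word [] from rfl, pairPS_word,
            EulerAux.s_k_zero, concPow_nil hP0]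
          cases k with
          | zero => simp
          | succ n => simp
      | cons a w' =>
          rw [list_sum_eq_zero, EulerAux.s_k_zero]
          · cases k with
            | zero =>
                rw [if_pos rfl, map_one, one_mul]
                rw [show concPow P 0 = (word [] : List Y →₀ K) from rfl, word_apply]
                simp
            | succ n =>
                rw [if_neg (Nat.succ_ne_zero n), map_zero, zero_mul]
          · intro parts hparts
            rw [if_neg]
            intro h0
            exact cuts_ne_nil hparts (List.length_eq_zero_iff.mp h0)
  | succ j ihj =>
      intro k w
      have hterm : ∀ parts ∈ cuts w,
          (if parts.length = j + 1 then
              pairPS (fun t => concPow P k t) (prodM m (parts.map word)) else 0)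
          = ∑ p ∈ Finset.HasAntidiagonal.antidiagonal k, (match parts with
              | [] => (0:K)
              | u :: ps => ((k.choose p.1 : K) * concPow P p.1 u) *
                  (if ps.length = j then
                    pairPS (fun t => concPow P p.2 t) (prodM m (ps.map word)) else 0)) := by
        intro parts _
        cases parts with
        | nil =>
            rw [if_neg (by simp)]
            symm
            apply Finset.sum_eq_zero
            intro p _
            rfl
        | cons u ps =>
            have hred : ∀ p : ℕ × ℕ, (match u :: ps with
                | [] => (0:K)
                | u' :: ps' => ((k.choose p.1 : K) * concPow P p.1 u') *
                    (if ps'.length = j then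
                      pairPS (fun t => concPow P p.2 t) (prodM m (ps'.map word)) else 0))
                = ((k.choose p.1 : K) * concPow P p.1 u) *
                    (if ps.length = j then
                      pairPS (fun t => concPow P p.2 t) (prodM m (ps.map word)) else 0) :=
              fun p => rfl
            rw [Finset.sum_congr rfl (fun p (_ : p ∈ Finset.HasAntidiagonal.antidiagonal k) => hred p)]
            by_cases hc : ps.length = j
            · rw [if_pos (by simp [hc]),
                show prodM m ((u :: ps).map word) = m (word u) (prodM m (ps.map word)) from rfl,
                pair_pow_shuffle_poly hm hP hP0]
              apply Finset.sum_congr rfl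
              intro p _
              rw [if_pos hc]
              ring
            · rw [if_neg (by simp [hc])]
              symm
              apply Finset.sum_eq_zero
              intro p _
              rw [if_neg hc, mul_zero]
      rw [List.map_congr_left hterm, list_sum_map_sum]
      have hsplit : ∀ p ∈ Finset.HasAntidiagonal.antidiagonal k,
          ((cuts w).map fun parts => match parts with
            | [] => (0:K)
            | u :: ps => ((k.choose p.1 : K) * concPow P p.1 u) *
                (if ps.length = j then
                  pairPS (fun t => concPow P p.2 t) (prodM m (ps.map word)) else 0)).sum
          = ∑ i ∈ Finset.range w.length, ((k.choose p.1 : K) * concPow P p.1 (w.take (i+1))) *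
              (algebraMap ℚ K (EulerAux.s p.2 j) * concPow P p.2 (w.drop (i+1))) := by
        intro p _
        rw [cuts_split w (fun u => (k.choose p.1 : K) * concPow P p.1 u)
          (fun ps => if ps.length = j then
            pairPS (fun t => concPow P p.2 t) (prodM m (ps.map word)) else 0)]
        apply Finset.sum_congr rfl
        intro i _
        rw [ihj p.2 (w.drop (i+1))]
      rw [Finset.sum_congr rfl hsplit]
      have hinner : ∀ p ∈ Finset.HasAntidiagonal.antidiagonal k,
          (∑ i ∈ Finset.range w.length, ((k.choose p.1 : K) * concPow P p.1 (w.take (i+1))) *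
            (algebraMap ℚ K (EulerAux.s p.2 j) * concPow P p.2 (w.drop (i+1))))
          = (k.choose p.1 : K) * algebraMap ℚ K (EulerAux.s p.2 j) *
              (concPow P k w - (if p.1 = 0 then concPow P k w else 0)) := by
        intro p hp
        have hpk := Finset.HasAntidiagonal.mem_antidiagonal.mp hp
        have hsum : ∑ i ∈ Finset.range (w.length + 1),
            concPow P p.1 (w.take i) * concPow P p.2 (w.drop i) = concPow P k w := by
          rw [← concP_apply, concPow_add, hpk]
        rw [Finset.sum_range_succ', List.take_zero, List.drop_zero] at hsum
        have hnil : concPow P p.1 [] * concPow P p.2 w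
            = (if p.1 = 0 then concPow P k w else 0) := by
          rw [concPow_nil hP0]
          by_cases hp1 : p.1 = 0
          · rw [if_pos hp1, if_pos hp1, one_mul, show p.2 = k from by omega]
          · rw [if_neg hp1, if_neg hp1, zero_mul]
        rw [hnil] at hsum
        calc (∑ i ∈ Finset.range w.length, ((k.choose p.1 : K) * concPow P p.1 (w.take (i+1))) *
              (algebraMap ℚ K (EulerAux.s p.2 j) * concPow P p.2 (w.drop (i+1))))
            = (k.choose p.1 : K) * algebraMap ℚ K (EulerAux.s p.2 j) *
              (∑ i ∈ Finset.range w.length,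
                concPow P p.1 (w.take (i+1)) * concPow P p.2 (w.drop (i+1))) := by
              rw [Finset.mul_sum]
              apply Finset.sum_congr rfl
              intro i _
              ring
          _ = _ := by
              rw [eq_sub_of_add_eq hsum]
      rw [Finset.sum_congr rfl hinner]
      rw [EulerAux.s_succ, map_sub, sub_mul, map_sum, Finset.sum_mul]
      have hS2 : ∑ p ∈ Finset.HasAntidiagonal.antidiagonal k, (k.choose p.1 : K) *
            algebraMap ℚ K (EulerAux.s p.2 j) * (if p.1 = 0 then concPow P k w else 0)
          = algebraMap ℚ K (EulerAux.s k j) * concPow P k w := by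
        rw [Finset.sum_congr rfl (fun (p : ℕ × ℕ) (_ : p ∈ Finset.HasAntidiagonal.antidiagonal k) => by
          rw [mul_ite, mul_zero])]
        rw [Finset.sum_eq_single_of_mem (0, k) (Finset.HasAntidiagonal.mem_antidiagonal.mpr (zero_add k))]
        · simp
        · intro p hp hne
          rw [if_neg]
          intro h0
          apply hne
          have hmm := Finset.HasAntidiagonal.mem_antidiagonal.mp hp
          rw [h0, zero_add] at hmm
          exact Prod.ext h0 hmm
      have hS1 : ∀ p ∈ Finset.HasAntidiagonal.antidiagonal k,
          algebraMap ℚ K ((k.choose p.1 : ℚ) * EulerAux.s p.2 j) * concPow P k w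
          = (k.choose p.1 : K) * algebraMap ℚ K (EulerAux.s p.2 j) * concPow P k w := by
        intro p _
        rw [map_mul, map_natCast]
      rw [Finset.sum_congr rfl hS1, ← hS2, ← Finset.sum_sub_distrib]
      apply Finset.sum_congr rfl
      intro p _
      ring

lemma piOne_pow (k : ℕ) (w : List Y) :
    piOneS m (fun t => concPow P k t) w = (if k = 1 then 1 else 0) * concPow P k w := by
  unfold piOneS
  have hterm : ∀ parts ∈ cuts w,
      (algebraMap ℚ K ((-1) ^ (parts.length - 1) / (parts.length : ℚ)) *
        pairPS (fun t => concPow P k t) (prodM m (parts.map word)))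
      = ∑ j ∈ Finset.range (w.length + 1),
          algebraMap ℚ K (EulerAux.cq j) *
            (if parts.length = j then
              pairPS (fun t => concPow P k t) (prodM m (parts.map word)) else 0) := by
    intro parts hparts
    have hle : parts.length ≤ w.length := cuts_length_le hparts
    symm
    rw [Finset.sum_congr rfl (fun j (_ : j ∈ Finset.range (w.length+1)) => by
      rw [mul_ite, mul_zero])]
    rw [Finset.sum_ite_eq (Finset.range (w.length+1)) parts.length
      (fun j => algebraMap ℚ K (EulerAux.cq j) *
        pairPS (fun t => concPow P k t) (prodM m (parts.map word)))]
    rw [if_pos (Finset.mem_range.mpr (by omega))]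
    rfl
  rw [List.map_congr_left hterm, list_sum_map_sum]
  rw [Finset.sum_congr rfl (fun j (_ : j ∈ Finset.range (w.length+1)) => by
    rw [list_sum_map_mul_left, cuts_pow_sum hm hP hP0 j k w])]
  have hcollect : ∑ j ∈ Finset.range (w.length+1), algebraMap ℚ K (EulerAux.cq j) *
      (algebraMap ℚ K (EulerAux.s k j) * concPow P k w)
      = algebraMap ℚ K (∑ j ∈ Finset.range (w.length+1), EulerAux.cq j * EulerAux.s k j) *
          concPow P k w := by
    rw [map_sum, Finset.sum_mul]
    apply Finset.sum_congr rfl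
    intro j _
    rw [map_mul]
    ring
  rw [hcollect]
  by_cases hlen : k ≤ w.length
  · rcases Nat.eq_zero_or_pos k with hk0 | hkpos
    · subst hk0
      have hz : ∀ j ∈ Finset.range (w.length+1), EulerAux.cq j * EulerAux.s 0 j = 0 := by
        intro j _
        rw [EulerAux.s_zero]
        by_cases hj : j = 0
        · subst hj
          simp [EulerAux.cq]
        · simp [hj]
      rw [Finset.sum_congr rfl hz, Finset.sum_const_zero, map_zero, zero_mul,
        if_neg (by omega), zero_mul]
    · rw [EulerAux.key_scalar k w.length hkpos hlen]
      by_cases hk1 : k = 1 <;> simp [hk1]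
  · push_neg at hlen
    rw [concPow_eq_zero_of_short hP0 hlen, mul_zero, mul_zero]

end AuxEulerMain
section AuxConv

lemma finsupp_sum_pick (Q : List Y →₀ K) (x : List Y) :
    (Q.sum fun t a => a * (if t = x then (1:K) else 0)) = Q x := by
  rw [Finsupp.sum]
  rw [Finset.sum_congr rfl (fun t (_ : t ∈ Q.support) => by rw [mul_ite, mul_one, mul_zero])]
  rw [Finset.sum_ite_eq' Q.support x (fun t => Q t)]
  by_cases h : x ∈ Q.support
  · rw [if_pos h]
  · rw [if_neg h, Finsupp.notMem_support_iff.mp h]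

lemma convT_pointwise (Δfn : List Y → (List Y × List Y →₀ K))
    (f g : (List Y →₀ K) → (List Y → K)) (Q : List Y →₀ K) (w : List Y) :
    convT Δfn f g Q w = Q.sum fun t a => a * convT Δfn f g (word t) w := by
  unfold convT
  apply Finsupp.sum_congr
  intro t _
  rw [show ((word t : List Y →₀ K).sum fun t' a' =>
      a' * ((Δfn t').sum fun p c => c * mulS (f (word p.1)) (g (word p.2)) w))
      = (Δfn t).sum fun p c => c * mulS (f (word p.1)) (g (word p.2)) w from by
    rw [show (word t : List Y →₀ K) = Finsupp.single t 1 from rfl]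
    rw [Finsupp.sum_single_index
      (zero_mul ((Δfn t).sum fun p c => c * mulS (f (word p.1)) (g (word p.2)) w)), one_mul]]

lemma pair_swap (Q p : List Y →₀ K) :
    pairPS (fun t => Q t) p = Q.sum fun t a => a * p t := by
  rw [pairPS_eq_sum (fun t => Q t) p (p.support ∪ Q.support) Finset.subset_union_left]
  rw [Finsupp.sum]
  rw [show (∑ t ∈ Q.support, Q t * p t) = ∑ t ∈ p.support ∪ Q.support, Q t * p t from
    Finset.sum_subset Finset.subset_union_right (fun t _ ht => by
      rw [Finsupp.notMem_support_iff.mp ht, zero_mul])]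
  apply Finset.sum_congr rfl
  intro t _
  ring

lemma convPow_pointwise (m : (List Y →₀ K) →ₗ[K] (List Y →₀ K) →ₗ[K] (List Y →₀ K))
    (Δfn : List Y → (List Y × List Y →₀ K)) (n : ℕ) (Q : List Y →₀ K) (w : List Y) :
    convPowPi m Δfn n Q w = Q.sum fun t a => a * convPowPi m Δfn n (word t) w := by
  cases n with
  | zero =>
      show eT Q w = Q.sum fun t a => a * eT (word t) w
      unfold eT
      by_cases hw : w = []
      · subst hw
        rw [if_pos rfl, ← finsupp_sum_pick Q ([] : List Y)]
        apply Finsupp.sum_congr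
        intro t _
        rw [if_pos rfl, word_apply]
      · rw [if_neg hw]
        symm
        rw [Finsupp.sum]
        apply Finset.sum_eq_zero
        intro t _
        rw [if_neg hw, mul_zero]
  | succ n => exact convT_pointwise Δfn _ (convPowPi m Δfn n) Q w

lemma piOne_pointwise (m : (List Y →₀ K) →ₗ[K] (List Y →₀ K) →ₗ[K] (List Y →₀ K))
    (Q : List Y →₀ K) (w : List Y) :
    piOneS m (fun t => Q t) w
      = Q.sum fun t a => a * piOneS m (fun t' => (word t : List Y →₀ K) t') w := by
  unfold piOneS
  have h1 : ∀ parts ∈ cuts w,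
      algebraMap ℚ K ((-1) ^ (parts.length - 1) / (parts.length : ℚ)) *
        pairPS (fun t => Q t) (prodM m (parts.map word))
      = ∑ t ∈ Q.support, Q t *
          (algebraMap ℚ K ((-1) ^ (parts.length - 1) / (parts.length : ℚ)) *
            (prodM m (parts.map word)) t) := by
    intro parts _
    rw [pair_swap, Finsupp.sum, Finset.mul_sum]
    apply Finset.sum_congr rfl
    intro t _
    ring
  rw [List.map_congr_left h1, list_sum_map_sum, Finsupp.sum]
  apply Finset.sum_congr rfl
  intro t _
  rw [list_sum_map_mul_left]
  congr 1
  congr 1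
  apply List.map_congr_left
  intro parts _
  rw [pairPS_word_right]

variable {φ : Y → Y → (Y →₀ K)} {m : (List Y →₀ K) →ₗ[K] (List Y →₀ K) →ₗ[K] (List Y →₀ K)}
variable (hm : IsPhiShuffle φ m) {P : List Y →₀ K}
variable (hP : PrimS m fun w => P w) (hP0 : P [] = 0)
include hm hP hP0

lemma convT_pow (Δfn : List Y → (List Y × List Y →₀ K)) (hΔ : IsDualWitness m Δfn)
    (f g : (List Y →₀ K) → (List Y → K))
    (hf : ∀ Q x, f Q x = Q.sum fun t a => a * f (word t) x)
    (hg : ∀ Q x, g Q x = Q.sum fun t a => a * g (word t) x)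
    (k : ℕ) (w : List Y) :
    convT Δfn f g (concPow P k) w =
      ∑ ij ∈ Finset.HasAntidiagonal.antidiagonal k,
        (k.choose ij.1 : K) * mulS (f (concPow P ij.1)) (g (concPow P ij.2)) w := by
  classical
  set S : Finset (List Y) := (Finset.range (k+1)).biUnion (fun i => (concPow P i).support)
    with hSdef
  have hSsub : ∀ i, i ≤ k → (concPow P i).support ⊆ S := fun i hi t ht =>
    Finset.mem_biUnion.mpr ⟨i, Finset.mem_range.mpr (by omega), ht⟩
  set T0 := (concPow P k).support with hT0def
  set U : Finset (List Y × List Y) :=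
    (T0.biUnion fun t => (Δfn t).support) ∪ S ×ˢ S with hUdef
  have hstep1 : convT Δfn f g (concPow P k) w
      = ∑ t ∈ T0, (concPow P k) t * ∑ p ∈ U, (Δfn t) p *
          mulS (f (word p.1)) (g (word p.2)) w := by
    unfold convT
    rw [Finsupp.sum]
    apply Finset.sum_congr rfl
    intro t ht
    congr 1
    rw [Finsupp.sum]
    apply Finset.sum_subset
    · intro p hp
      exact Finset.mem_union_left _ (Finset.mem_biUnion.mpr ⟨t, ht, hp⟩)
    · intro p _ hp
      rw [Finsupp.notMem_support_iff.mp hp, zero_mul]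
  have hstep2 : ∀ t ∈ T0,
      (concPow P k) t * (∑ p ∈ U, (Δfn t) p * mulS (f (word p.1)) (g (word p.2)) w)
      = ∑ p ∈ U, (concPow P k) t * (m (word p.1) (word p.2)) t *
          mulS (f (word p.1)) (g (word p.2)) w := by
    intro t _
    rw [Finset.mul_sum]
    apply Finset.sum_congr rfl
    intro p _
    rw [show (Δfn t) p = (m (word p.1) (word p.2)) t from (hΔ p.1 p.2 t).symm]
    ring
  rw [hstep1, Finset.sum_congr rfl hstep2, Finset.sum_comm]
  have hstep3 : ∀ p ∈ U,
      (∑ t ∈ T0, (concPow P k) t * (m (word p.1) (word p.2)) t *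
        mulS (f (word p.1)) (g (word p.2)) w)
      = (∑ ij ∈ Finset.HasAntidiagonal.antidiagonal k, (k.choose ij.1 : K) *
          (concPow P ij.1 p.1 * concPow P ij.2 p.2)) *
            mulS (f (word p.1)) (g (word p.2)) w := by
    intro p _
    rw [← Finset.sum_mul]
    congr 1
    rw [pair_sum_eq (concPow P k) (m (word p.1) (word p.2)) T0 Finset.inter_subset_left,
      pair_pow_shuffle hm hP hP0 k p.1 p.2]
  rw [Finset.sum_congr rfl hstep3]
  have hstep4 : ∀ p ∈ U,
      (∑ ij ∈ Finset.HasAntidiagonal.antidiagonal k, (k.choose ij.1 : K) *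
          (concPow P ij.1 p.1 * concPow P ij.2 p.2)) *
            mulS (f (word p.1)) (g (word p.2)) w
      = ∑ ij ∈ Finset.HasAntidiagonal.antidiagonal k, (k.choose ij.1 : K) *
          ((concPow P ij.1 p.1 * concPow P ij.2 p.2) *
            mulS (f (word p.1)) (g (word p.2)) w) := by
    intro p _
    rw [Finset.sum_mul]
    apply Finset.sum_congr rfl
    intro ij _
    ring
  rw [Finset.sum_congr rfl hstep4, Finset.sum_comm]
  apply Finset.sum_congr rfl
  intro ij hij
  have hijk := Finset.HasAntidiagonal.mem_antidiagonal.mp hij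
  rw [← Finset.mul_sum]
  congr 1
  have hshrink : (∑ p ∈ U, (concPow P ij.1 p.1 * concPow P ij.2 p.2) *
        mulS (f (word p.1)) (g (word p.2)) w)
      = ∑ p ∈ S ×ˢ S, (concPow P ij.1 p.1 * concPow P ij.2 p.2) *
          mulS (f (word p.1)) (g (word p.2)) w := by
    symm
    apply Finset.sum_subset (Finset.subset_union_right)
    intro p _ hp
    have : concPow P ij.1 p.1 * concPow P ij.2 p.2 = 0 := by
      by_cases h1 : p.1 ∈ S
      · have h2 : p.2 ∉ S := fun h2 => hp (Finset.mem_product.mpr ⟨h1, h2⟩)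
        have : p.2 ∉ (concPow P ij.2).support :=
          fun hc => h2 (hSsub ij.2 (by omega) hc)
        rw [Finsupp.notMem_support_iff.mp this, mul_zero]
      · have : p.1 ∉ (concPow P ij.1).support :=
          fun hc => h1 (hSsub ij.1 (by omega) hc)
        rw [Finsupp.notMem_support_iff.mp this, zero_mul]
    rw [this, zero_mul]
  rw [hshrink]
  have hfS : ∀ x, f (concPow P ij.1) x = ∑ u ∈ S, (concPow P ij.1) u * f (word u) x := by
    intro x
    rw [hf (concPow P ij.1) x, Finsupp.sum]
    apply Finset.sum_subset (hSsub ij.1 (by omega))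
    intro u _ hu
    rw [Finsupp.notMem_support_iff.mp hu, zero_mul]
  have hgS : ∀ x, g (concPow P ij.2) x = ∑ v ∈ S, (concPow P ij.2) v * g (word v) x := by
    intro x
    rw [hg (concPow P ij.2) x, Finsupp.sum]
    apply Finset.sum_subset (hSsub ij.2 (by omega))
    intro v _ hv
    rw [Finsupp.notMem_support_iff.mp hv, zero_mul]
  calc (∑ p ∈ S ×ˢ S, (concPow P ij.1) p.1 * (concPow P ij.2) p.2 *
          mulS (f (word p.1)) (g (word p.2)) w)
      = ∑ u ∈ S, ∑ v ∈ S, ∑ r ∈ Finset.range (w.length + 1),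
          ((concPow P ij.1) u * f (word u) (w.take r)) *
            ((concPow P ij.2) v * g (word v) (w.drop r)) := by
        rw [Finset.sum_product]
        apply Finset.sum_congr rfl
        intro u _
        apply Finset.sum_congr rfl
        intro v _
        show (concPow P ij.1) u * (concPow P ij.2) v * mulS (f (word u)) (g (word v)) w = _
        rw [show mulS (f (word u)) (g (word v)) w = ∑ r ∈ Finset.range (w.length + 1),
          f (word u) (w.take r) * g (word v) (w.drop r) from rfl, Finset.mul_sum]
        apply Finset.sum_congr rfl
        intro r _
        ring
    _ = ∑ r ∈ Finset.range (w.length + 1), ∑ u ∈ S, ∑ v ∈ S,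
          ((concPow P ij.1) u * f (word u) (w.take r)) *
            ((concPow P ij.2) v * g (word v) (w.drop r)) := by
        rw [Finset.sum_congr rfl (fun u (_ : u ∈ S) => Finset.sum_comm)]
        exact Finset.sum_comm
    _ = mulS (f (concPow P ij.1)) (g (concPow P ij.2)) w := by
        show _ = ∑ r ∈ Finset.range (w.length + 1),
          f (concPow P ij.1) (w.take r) * g (concPow P ij.2) (w.drop r)
        apply Finset.sum_congr rfl
        intro r _
        rw [hfS (w.take r), hgS (w.drop r), Finset.sum_mul_sum]

lemma convPow_on_pow (Δfn : List Y → (List Y × List Y →₀ K)) (hΔ : IsDualWitness m Δfn) :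
    ∀ (n k : ℕ) (w : List Y),
    convPowPi m Δfn n (concPow P k) w
      = algebraMap ℚ K (if k = n then (n.factorial : ℚ) else 0) * concPow P k w := by
  intro n
  induction n with
  | zero =>
      intro k w
      show eT (concPow P k) w = _
      unfold eT
      cases k with
      | zero =>
          rw [if_pos rfl, Nat.factorial_zero, Nat.cast_one, map_one, one_mul]
          rw [show concPow P 0 = (word [] : List Y →₀ K) from rfl, word_apply, word_apply]
          by_cases hw : w = []
          · subst hw
            rw [if_pos rfl, if_pos rfl]
          · rw [if_neg hw, if_neg (fun h => hw h.symm)]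
      | succ k' =>
          rw [if_neg (Nat.succ_ne_zero k'), map_zero, zero_mul]
          by_cases hw : w = []
          · subst hw
            rw [if_pos rfl, concPow_nil hP0, if_neg (Nat.succ_ne_zero k')]
          · rw [if_neg hw]
  | succ n ihn =>
      intro k w
      show convT Δfn (fun Q => piOneS m fun t => Q t) (convPowPi m Δfn n) (concPow P k) w = _
      rw [convT_pow hm hP hP0 Δfn hΔ _ _
        (fun Q x => piOne_pointwise m Q x) (fun Q x => convPow_pointwise m Δfn n Q x) k w]
      have hmulS : ∀ i j : ℕ,
          mulS (piOneS m fun t => (concPow P i) t) (convPowPi m Δfn n (concPow P j)) w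
          = ((if i = 1 then (1:K) else 0) *
              algebraMap ℚ K (if j = n then (n.factorial:ℚ) else 0)) * concPow P (i+j) w := by
        intro i j
        have h1 : ∀ r ∈ Finset.range (w.length + 1),
            piOneS m (fun t => (concPow P i) t) (w.take r) *
              convPowPi m Δfn n (concPow P j) (w.drop r)
            = ((if i = 1 then (1:K) else 0) * concPow P i (w.take r)) *
                (algebraMap ℚ K (if j = n then (n.factorial:ℚ) else 0) * concPow P j (w.drop r)) := by
          intro r _
          rw [piOne_pow hm hP hP0, ihn]
        rw [show mulS (piOneS m fun t => (concPow P i) t) (convPowPi m Δfn n (concPow P j)) w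
            = ∑ r ∈ Finset.range (w.length+1), piOneS m (fun t => (concPow P i) t) (w.take r) *
                convPowPi m Δfn n (concPow P j) (w.drop r) from rfl]
        rw [Finset.sum_congr rfl h1]
        calc (∑ r ∈ Finset.range (w.length + 1),
              ((if i = 1 then (1:K) else 0) * concPow P i (w.take r)) *
                (algebraMap ℚ K (if j = n then (n.factorial:ℚ) else 0) * concPow P j (w.drop r)))
            = ((if i = 1 then (1:K) else 0) *
                algebraMap ℚ K (if j = n then (n.factorial:ℚ) else 0)) *
                ∑ r ∈ Finset.range (w.length + 1),
                  concPow P i (w.take r) * concPow P j (w.drop r) := by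
              rw [Finset.mul_sum]
              apply Finset.sum_congr rfl
              intro r _
              ring
          _ = _ := by rw [← concP_apply, concPow_add]
      rw [Finset.sum_congr rfl (fun (ij : ℕ × ℕ) (_ : ij ∈ Finset.HasAntidiagonal.antidiagonal k) => by
        rw [hmulS ij.1 ij.2])]
      cases k with
      | zero =>
          rw [Finset.Nat.antidiagonal_zero, Finset.sum_singleton]
          norm_num
      | succ k' =>
          rw [Finset.sum_eq_single_of_mem (1, k')
            (Finset.HasAntidiagonal.mem_antidiagonal.mpr (by omega))]
          · rw [if_pos rfl, Nat.choose_one_right]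
            by_cases hkn : k' = n
            · subst hkn
              rw [if_pos rfl, if_pos rfl]
              have hfa : algebraMap ℚ K (((k'+1).factorial : ℚ))
                  = ((k'+1 : ℕ) : K) * algebraMap ℚ K ((k'.factorial : ℚ)) := by
                rw [Nat.factorial_succ]
                push_cast
                ring
              rw [hfa, show 1 + k' = k' + 1 by omega]
              push_cast
              ring
            · rw [if_neg hkn, if_neg (by omega : ¬ (k' + 1 = n + 1))]
              rw [map_zero, mul_zero, zero_mul, mul_zero, zero_mul]
          · intro ij hij hne
            have hij1 : ij.1 ≠ 1 := by
              intro h1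
              apply hne
              have := Finset.HasAntidiagonal.mem_antidiagonal.mp hij
              exact Prod.ext h1 (by omega)
            rw [if_neg hij1, zero_mul, zero_mul, mul_zero]

end AuxConv
/-- for a primitive polynomial `P`, `π₁(P) = P` and the Eulerian
projectors `π_n = (1/n!) π₁^{⋆ n}` satisfy `π_n(P^k) = δ_{k,n} P^k`. -/
theorem eulerian_projectors_on_primitive_powers (φ : Y → Y → (Y →₀ K))
    (m : (List Y →₀ K) →ₗ[K] (List Y →₀ K) →ₗ[K] (List Y →₀ K))
    (hm : IsPhiShuffle φ m) (hassoc : PhiAssoc φ) (hcomm : PhiComm φ)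
    (Δfn : List Y → (List Y × List Y →₀ K)) (hΔ : IsDualWitness m Δfn)
    (hmod : PhiModerate φ)
    (P : List Y →₀ K) (hP : PrimS m fun w => P w) :
    (∀ w : List Y, piOneS m (fun t => P t) w = P w) ∧
    (∀ k n : ℕ, 0 < k → 0 < n → ∀ w : List Y,
      algebraMap ℚ K (1 / (Nat.factorial n : ℚ)) * convPowPi m Δfn n (concPow P k) w =
        if k = n then concPow P k w else 0) := by
  have hP0 : P [] = 0 := by
    have h := hP [] []
    unfold DeltaS at h
    rw [hm.1, pairPS_word] at h
    rw [if_pos rfl] at h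
    have h2 : P [] + 0 = P [] + P [] := by
      rw [add_zero]
      exact h
    exact (add_left_cancel h2).symm
  constructor
  · intro w
    have h := piOne_pow hm hP hP0 1 w
    rw [concPow_one] at h
    rw [h, if_pos rfl, one_mul]
  · intro k n hk hn w
    rw [convPow_on_pow hm hP hP0 Δfn hΔ n k w, ← mul_assoc, ← map_mul]
    by_cases hkn : k = n
    · rw [if_pos hkn, if_pos hkn]
      rw [show (1 / (n.factorial : ℚ)) * (n.factorial : ℚ) = 1 from by
        have : (n.factorial : ℚ) ≠ 0 := Nat.cast_ne_zero.mpr (Nat.factorial_ne_zero n)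
        field_simp]
      rw [map_one, one_mul]
    · rw [if_neg hkn, if_neg hkn, mul_zero, map_zero, zero_mul]

end
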